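/- Let r₁, r₂, …, rₙ : Ξ → ℝ≥0 be rules and let ⟨R, ≤⟩ be the rulebook with R = {r₁, …, rₙ} in which ≤ is a linear order satisfying r₁ > r₂ > ⋯ > rₙ. Then for all x, y ∈ Ξ, x ≲ y holds if and only if the tuple (r₁(x), r₂(x), …, rₙ(x)) is less than or equal to the tuple (r₁(y), r₂(y), …, rₙ(y)) in the lexicographic order on ℝ≥0ⁿ. -/

import Mathlib

/-- A rulebook on `Ξ` is a finite index set `ι` of rules `rule : ι → Ξ → ℝ≥0`
together with a preorder `rle` on the rules.  The induced relation `≲` on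
realizations: `x ≲ y` iff every rule preferring `y` is overridden by a
strictly higher rule preferring `x`. -/
def RulebookLE {Ξ ι : Type*} (rule : ι → Ξ → NNReal) (rle : ι → ι → Prop)
    (x y : Ξ) : Prop :=
  ∀ i, rule i y < rule i x → ∃ j, (rle i j ∧ ¬ rle j i) ∧ rule j x < rule j y

/-- The induced strict relation `x ≺ y` iff `x ≲ y` and `¬ y ≲ x`. -/
def RulebookLT {Ξ ι : Type*} (rule : ι → Ξ → NNReal) (rle : ι → ι → Prop)
    (x y : Ξ) : Prop :=
  RulebookLE rule rle x y ∧ ¬ RulebookLE rule rle y x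

/-- The rulebook `r₁ > r₂ > ⋯ > rₙ`: rule `i` has higher priority than
rule `j` iff `j ≤ i` as indices in `Fin n` (index `0` is most important). -/
theorem stmt3 {Ξ : Type*} (n : ℕ) (rule : Fin n → Ξ → NNReal) (x y : Ξ) :
    RulebookLE rule (fun i j => j ≤ i) x y ↔
      ((∀ i, rule i x = rule i y) ∨
        ∃ i, (∀ j, j < i → rule j x = rule j y) ∧ rule i x < rule i y) := by
  constructor
  · intro h
    by_cases hall : ∀ i, rule i x = rule i y
    · exact Or.inl hall
    · right
      push_neg at hall
      obtain ⟨i₀, hi₀⟩ := hall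
      obtain ⟨i, hi, hmin⟩ := Finset.exists_min_image
        (Finset.univ.filter (fun i => rule i x ≠ rule i y)) id
        ⟨i₀, by simp [hi₀]⟩
      simp only [Finset.mem_filter, Finset.mem_univ, true_and] at hi hmin
      have heq : ∀ j, j < i → rule j x = rule j y := by
        intro j hj
        by_contra hne
        exact absurd (hmin j hne) (not_le_of_gt hj)
      refine ⟨i, heq, ?_⟩
      rcases lt_or_gt_of_ne hi with h' | h'
      · exact h'
      · obtain ⟨j, ⟨hj1, hj2⟩, hjlt⟩ := h i h'
        have hji : j < i := lt_of_le_not_ge hj1 hj2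
        exact absurd (heq j hji ▸ hjlt) (lt_irrefl _)
  · rintro (hall | ⟨i, heq, hlt⟩) k hk
    · exact absurd (hall k ▸ hk) (lt_irrefl _)
    · have hik : i < k := by
        rcases lt_trichotomy k i with h' | h' | h'
        · exact absurd (heq k h' ▸ hk) (lt_irrefl _)
        · exact absurd (h' ▸ hk) (lt_asymm hlt)
        · exact h'
      exact ⟨i, ⟨le_of_lt hik, not_le_of_gt hik⟩, hlt⟩
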